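/- Let X₁, …, X_n be i.i.d. nonnegative random variables with mean μ = E[X₁] > 0 and finite ℓ-th moment E[X₁^ℓ] for some ℓ ∈ (1, 2]. Then for every t with 0 < t ≤ μ, P((1/n)∑_{i=1}^n X_i ≤ t) ≤ exp( -n(ℓ-1)(μ - t)^{ℓ/(ℓ-1)} / (ℓ · (E[X₁^ℓ])^{1/(ℓ-1)}) ). -/

import Mathlib

open MeasureTheory ProbabilityTheory

private lemma aux_exp_bound (ℓ : ℝ) (hℓ1 : 1 < ℓ) (hℓ2 : ℓ ≤ 2) :
    ∀ x : ℝ, 0 ≤ x → Real.exp (-x) ≤ 1 - x + x ^ ℓ / ℓ := by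
  have hℓ0 : (0:ℝ) < ℓ := by linarith
  set f : ℝ → ℝ := fun x => Real.exp (-x) - 1 + x - x ^ ℓ / ℓ with hf
  have hderiv : ∀ x : ℝ, HasDerivAt f (-Real.exp (-x) + 1 - x ^ (ℓ - 1)) x := by
    intro x
    have h1 : HasDerivAt (fun x : ℝ => Real.exp (-x)) (-Real.exp (-x)) x := by
      exact ((Real.hasDerivAt_exp (-x)).comp x (hasDerivAt_neg x)).congr_deriv (by ring)
    have h2 : HasDerivAt (fun x : ℝ => x ^ ℓ / ℓ) (x ^ (ℓ - 1)) x := by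
      have := (Real.hasDerivAt_rpow_const (p := ℓ) (x := x) (Or.inr hℓ1.le)).div_const ℓ
      simpa [mul_div_assoc, mul_div_cancel_left₀ _ (ne_of_gt hℓ0)] using this
    exact ((h1.sub_const 1).add (hasDerivAt_id x)).sub h2
  have hanti : AntitoneOn f (Set.Ici 0) := by
    apply antitoneOn_of_deriv_nonpos (convex_Ici 0)
    · exact fun x _ => (hderiv x).differentiableAt.continuousAt.continuousWithinAt
    · exact fun x _ => (hderiv x).differentiableAt.differentiableWithinAt
    · intro x hx
      rw [interior_Ici] at hx
      have hx0 : (0:ℝ) < x := hx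
      rw [(hderiv x).deriv]
      have key : 1 - Real.exp (-x) ≤ x ^ (ℓ - 1) := by
        rcases le_total x 1 with h | h
        · have h1 : 1 - Real.exp (-x) ≤ x := by nlinarith [Real.add_one_le_exp (-x)]
          have h2 : x ^ (1:ℝ) ≤ x ^ (ℓ - 1) :=
            Real.rpow_le_rpow_of_exponent_ge hx0 h (by linarith)
          rw [Real.rpow_one] at h2; linarith
        · have h2 : (1:ℝ) ≤ x ^ (ℓ - 1) := by
            calc (1:ℝ) = 1 ^ (ℓ - 1) := (Real.one_rpow _).symm
            _ ≤ x ^ (ℓ - 1) := Real.rpow_le_rpow zero_le_one h (by linarith)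
          nlinarith [Real.exp_pos (-x)]
      linarith
  intro x hx
  have hfx : f x ≤ f 0 := hanti Set.self_mem_Ici hx hx
  have h0 : f 0 = 0 := by
    simp [hf, Real.zero_rpow (ne_of_gt hℓ0)]
  rw [h0] at hfx
  simp only [hf] at hfx
  linarith

theorem chernoff_lower_tail_iid_nonneg
    {Ω : Type*} [MeasurableSpace Ω] (μ : Measure Ω) [IsProbabilityMeasure μ]
    (n : ℕ) (hn : 0 < n) (X : Fin n → Ω → ℝ)
    (hXmeas : ∀ i, Measurable (X i))
    (hindep : iIndepFun X μ)
    (hident : ∀ i, IdentDistrib (X i) (X ⟨0, hn⟩) μ μ)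
    (hpos : ∀ i ω, 0 ≤ X i ω)
    (ℓ : ℝ) (hℓ1 : 1 < ℓ) (hℓ2 : ℓ ≤ 2)
    (hintℓ : Integrable (fun ω => X ⟨0, hn⟩ ω ^ ℓ) μ)
    (hint1 : Integrable (X ⟨0, hn⟩) μ)
    (hmean : 0 < ∫ ω, X ⟨0, hn⟩ ω ∂μ)
    (t : ℝ) (ht : 0 < t) (ht' : t ≤ ∫ ω, X ⟨0, hn⟩ ω ∂μ) :
    (μ {ω | (1 / (n : ℝ)) * ∑ i, X i ω ≤ t}).toReal ≤
      Real.exp (-((n : ℝ) * (ℓ - 1) * ((∫ ω, X ⟨0, hn⟩ ω ∂μ) - t) ^ (ℓ / (ℓ - 1))) /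
        (ℓ * (∫ ω, X ⟨0, hn⟩ ω ^ ℓ ∂μ) ^ (1 / (ℓ - 1)))) := by
  have hℓ0 : (0:ℝ) < ℓ := by linarith
  have hℓ1' : (0:ℝ) < ℓ - 1 := by linarith
  have hn' : (0:ℝ) < n := by exact_mod_cast hn
  have hnne : (n:ℝ) ≠ 0 := ne_of_gt hn'
  set X0 : Ω → ℝ := X ⟨0, hn⟩ with hX0
  set m : ℝ := ∫ ω, X0 ω ∂μ with hm
  set M : ℝ := ∫ ω, X0 ω ^ ℓ ∂μ with hM
  have hX0pos : ∀ ω, 0 ≤ X0 ω := hpos _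
  have hMnn : 0 ≤ M := integral_nonneg fun ω => Real.rpow_nonneg (hX0pos ω) ℓ
  have hMpos : 0 < M := by
    rcases hMnn.lt_or_eq with h | h
    · exact h
    · exfalso
      have hz : (fun ω => X0 ω ^ ℓ) =ᵐ[μ] 0 := by
        rw [← integral_eq_zero_iff_of_nonneg (fun ω => Real.rpow_nonneg (hX0pos ω) ℓ) hintℓ]
        exact h.symm
      have hz' : X0 =ᵐ[μ] 0 := by
        filter_upwards [hz] with ω hω
        have h1 : X0 ω ^ ℓ = 0 := hω
        exact (Real.rpow_eq_zero (hX0pos ω) (ne_of_gt hℓ0)).mp h1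
      have : m = 0 := by
        rw [hm, integral_congr_ae hz']; simp
      linarith
  rcases eq_or_lt_of_le ht' with hteq | htlt
  · -- trivial case t = m
    have hd0 : m - t = 0 := by rw [hteq]; ring
    rw [hd0, Real.zero_rpow (by positivity : ℓ / (ℓ - 1) ≠ 0)]
    simp only [mul_zero, neg_zero, zero_div, Real.exp_zero]
    simpa using ENNReal.toReal_mono ENNReal.one_ne_top (prob_le_one (μ := μ))
  set d : ℝ := m - t with hdd
  have hd : 0 < d := by rw [hdd]; linarith
  set lam : ℝ := (d / M) ^ ((1:ℝ) / (ℓ - 1)) with hlam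
  have hlampos : 0 < lam := Real.rpow_pos_of_pos (div_pos hd hMpos) _
  set S : Ω → ℝ := fun ω => ∑ i, X i ω with hSdef
  have hSmeas : Measurable S := Finset.measurable_sum Finset.univ (fun i _ => hXmeas i)
  have hSnn : ∀ ω, 0 ≤ S ω := fun ω => Finset.sum_nonneg fun i _ => hpos i ω
  set f : Ω → ℝ := fun ω => Real.exp (-lam * S ω) with hfdef
  have hfmeas : Measurable f := (hSmeas.const_mul (-lam)).exp
  have hfnn : ∀ ω, 0 ≤ f ω := fun ω => (Real.exp_pos _).le
  have hfbdd : ∀ ω, f ω ≤ 1 := by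
    intro ω
    rw [hfdef]
    simp only
    rw [← Real.exp_zero]
    exact Real.exp_le_exp.mpr (by nlinarith [hSnn ω, hlampos])
  have hfint : Integrable f μ := by
    apply Integrable.mono' (integrable_const (1:ℝ)) hfmeas.aestronglyMeasurable
    filter_upwards with ω
    rw [Real.norm_eq_abs, abs_of_nonneg (hfnn ω)]
    exact hfbdd ω
  set ε : ℝ := Real.exp (-lam * ((n:ℝ) * t)) with hε
  have hεpos : 0 < ε := Real.exp_pos _
  have hset : {ω | (1 / (n : ℝ)) * ∑ i, X i ω ≤ t} = {ω | ε ≤ f ω} := by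
    ext ω
    simp only [Set.mem_setOf_eq, hε, hfdef, hSdef, Real.exp_le_exp]
    have e : (n:ℝ) * ((1/(n:ℝ)) * ∑ i, X i ω) = ∑ i, X i ω := by field_simp
    constructor
    · intro h
      have h1 : (∑ i, X i ω) ≤ (n:ℝ) * t := by
        have h2 := mul_le_mul_of_nonneg_left h hn'.le
        rw [e] at h2
        exact h2
      have h3 := mul_le_mul_of_nonneg_left h1 hlampos.le
      linarith
    · intro h
      have h1 : lam * (∑ i, X i ω) ≤ lam * ((n:ℝ) * t) := by linarith
      have h2 : (∑ i, X i ω) ≤ (n:ℝ) * t := (mul_le_mul_iff_right₀ hlampos).mp h1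
      rw [one_div, inv_mul_le_iff₀ hn']
      exact h2
  have hmarkov : (μ {ω | (1 / (n : ℝ)) * ∑ i, X i ω ≤ t}).toReal ≤ (∫ ω, f ω ∂μ) / ε := by
    rw [hset, le_div_iff₀ hεpos]
    calc (μ {ω | ε ≤ f ω}).toReal * ε = ε * (μ {ω | ε ≤ f ω}).toReal := mul_comm _ _
      _ ≤ ∫ ω, f ω ∂μ :=
        mul_meas_ge_le_integral_of_nonneg (Filter.Eventually.of_forall hfnn) hfint ε
  have hident' : ∀ i, mgf (X i) μ (-lam) = mgf X0 μ (-lam) := by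
    intro i
    have hu : Measurable fun x : ℝ => Real.exp (-lam * x) :=
      (measurable_id.const_mul (-lam)).exp
    have h := ((hident i).comp hu).integral_eq
    simpa [mgf, Function.comp] using h
  have hmgf : ∫ ω, f ω ∂μ = (mgf X0 μ (-lam)) ^ n := by
    have h1 : ∫ ω, f ω ∂μ = mgf (∑ i, X i) μ (-lam) := by
      unfold mgf
      refine integral_congr_ae (Filter.Eventually.of_forall fun ω => ?_)
      simp [hfdef, hSdef, Finset.sum_apply]
    rw [h1, hindep.mgf_sum hXmeas Finset.univ]
    simp only [hident']
    rw [Finset.prod_const, Finset.card_univ, Fintype.card_fin]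
  set B : ℝ := 1 - lam * m + lam ^ ℓ * M / ℓ with hB
  have hintg : Integrable (fun ω => 1 - lam * X0 ω + lam ^ ℓ * X0 ω ^ ℓ / ℓ) μ :=
    ((integrable_const 1).sub (hint1.const_mul lam)).add
      ((hintℓ.const_mul (lam ^ ℓ)).div_const ℓ)
  have hmgfle : mgf X0 μ (-lam) ≤ B := by
    unfold mgf
    have hptwise : ∀ ω, Real.exp (-lam * X0 ω) ≤
        1 - lam * X0 ω + lam ^ ℓ * X0 ω ^ ℓ / ℓ := by
      intro ω
      have h := aux_exp_bound ℓ hℓ1 hℓ2 (lam * X0 ω) (mul_nonneg hlampos.le (hX0pos ω))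
      rw [Real.mul_rpow hlampos.le (hX0pos ω)] at h
      simpa [neg_mul] using h
    have hintf0 : Integrable (fun ω => Real.exp (-lam * X0 ω)) μ := by
      apply Integrable.mono' (integrable_const (1:ℝ))
        ((hXmeas _).const_mul (-lam)).exp.aestronglyMeasurable
      filter_upwards with ω
      rw [Real.norm_eq_abs, abs_of_nonneg (Real.exp_pos _).le, ← Real.exp_zero]
      exact Real.exp_le_exp.mpr (by nlinarith [hX0pos ω, hlampos])
    calc ∫ ω, Real.exp (-lam * X0 ω) ∂μ
        ≤ ∫ ω, (1 - lam * X0 ω + lam ^ ℓ * X0 ω ^ ℓ / ℓ) ∂μ :=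
          integral_mono hintf0 hintg hptwise
      _ = B := by
          have e1 : ∫ ω, (1 - lam * X0 ω + lam ^ ℓ * X0 ω ^ ℓ / ℓ) ∂μ
              = (∫ ω, (1 - lam * X0 ω) ∂μ) + ∫ ω, lam ^ ℓ * X0 ω ^ ℓ / ℓ ∂μ :=
            integral_add ((integrable_const 1).sub (hint1.const_mul lam))
              ((hintℓ.const_mul (lam ^ ℓ)).div_const ℓ)
          have e2 : ∫ ω, (1 - lam * X0 ω) ∂μ = 1 - lam * m := by
            rw [integral_sub (integrable_const 1) (hint1.const_mul lam),
              integral_const, integral_const_mul]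
            simp [measure_univ, ← hm]
          have e3 : ∫ ω, lam ^ ℓ * X0 ω ^ ℓ / ℓ ∂μ = lam ^ ℓ * M / ℓ := by
            rw [integral_div, integral_const_mul, ← hM]
          rw [e1, e2, e3, hB]
  have hBexp : B ≤ Real.exp (-lam * m + lam ^ ℓ * M / ℓ) := by
    have h := Real.add_one_le_exp (-lam * m + lam ^ ℓ * M / ℓ)
    rw [hB]; linarith
  have hmgfnn : 0 ≤ mgf X0 μ (-lam) := mgf_nonneg
  have hpow : (mgf X0 μ (-lam)) ^ n ≤ Real.exp ((n:ℝ) * (-lam * m + lam ^ ℓ * M / ℓ)) := by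
    calc (mgf X0 μ (-lam)) ^ n ≤ (Real.exp (-lam * m + lam ^ ℓ * M / ℓ)) ^ n :=
          pow_le_pow_left₀ hmgfnn (hmgfle.trans hBexp) n
      _ = Real.exp ((n:ℝ) * (-lam * m + lam ^ ℓ * M / ℓ)) := by
          rw [← Real.exp_nat_mul]
  have hcomb : (μ {ω | (1 / (n : ℝ)) * ∑ i, X i ω ≤ t}).toReal ≤
      Real.exp ((n:ℝ) * (-lam * m + lam ^ ℓ * M / ℓ) + lam * ((n:ℝ) * t)) := by
    calc (μ {ω | (1 / (n : ℝ)) * ∑ i, X i ω ≤ t}).toReal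
        ≤ (∫ ω, f ω ∂μ) / ε := hmarkov
      _ ≤ Real.exp ((n:ℝ) * (-lam * m + lam ^ ℓ * M / ℓ)) / ε := by
          rw [hmgf]; gcongr
      _ = Real.exp ((n:ℝ) * (-lam * m + lam ^ ℓ * M / ℓ) + lam * ((n:ℝ) * t)) := by
          rw [hε, ← Real.exp_sub]
          congr 1
          ring
  have hexp_eq : (n:ℝ) * (-lam * m + lam ^ ℓ * M / ℓ) + lam * ((n:ℝ) * t) =
      -((n : ℝ) * (ℓ - 1) * d ^ (ℓ / (ℓ - 1))) / (ℓ * M ^ ((1:ℝ) / (ℓ - 1))) := by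
    set r : ℝ := 1 / (ℓ - 1) with hr
    set q : ℝ := ℓ / (ℓ - 1) with hq
    have hrq : r + 1 = q := by rw [hr, hq]; field_simp; ring
    have hMr : (0:ℝ) < M ^ r := Real.rpow_pos_of_pos hMpos r
    have hMrne : M ^ r ≠ 0 := ne_of_gt hMr
    have hℓne : ℓ ≠ 0 := ne_of_gt hℓ0
    have h1 : lam * d = d ^ q / M ^ r := by
      rw [hlam, Real.div_rpow hd.le hMpos.le, div_mul_eq_mul_div,
        ← Real.rpow_add_one (ne_of_gt hd) r, hrq]
    have h2 : lam ^ ℓ * M = d ^ q / M ^ r := by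
      have hdm : (0:ℝ) ≤ d / M := (div_pos hd hMpos).le
      have hrl : r * ℓ = q := by rw [hr, hq]; field_simp
      rw [hlam, ← Real.rpow_mul hdm, hrl, Real.div_rpow hd.le hMpos.le]
      have hMq : M ^ q = M ^ r * M := by
        rw [← hrq, Real.rpow_add hMpos, Real.rpow_one]
      rw [hMq]
      field_simp
    have hnd : (n:ℝ) * (-lam * m + lam ^ ℓ * M / ℓ) + lam * ((n:ℝ) * t) =
        -((n:ℝ) * (lam * d - lam ^ ℓ * M / ℓ)) := by
      rw [hdd]; ring
    rw [hnd, h2, h1]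
    field_simp
  rw [← hexp_eq]
  exact hcomb
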